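/- Let d' be an odd-dimensional Heisenberg Lie algebra with basis {a₁,…,a_n, b₁,…,b_n, c} and nonzero brackets [aᵢ, bᵢ] = c. Then r = Σᵢ (aᵢ ⊗ bᵢ − bᵢ ⊗ aᵢ) and s = −c satisfy the equations [r, Δ(s)] = 0 and ([r₁₂, r₁₃] + r₁₂ s₃) + cyclic = 0 in U(d')^{⊗3}. -/

import Mathlib

/-!
STATEMENT 16: Let `d'` be the (2n+1)-dimensional Heisenberg Lie algebra with basis
`{a₁,…,a_n, b₁,…,b_n, c}` and only nonzero brackets `⁅aᵢ, bᵢ⁆ = c`.  Then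
`r = Σᵢ (aᵢ ⊗ bᵢ − bᵢ ⊗ aᵢ)` and `s = −c` satisfy
`[r, Δ(s)] = 0`  (with `Δ(s) = s ⊗ 1 + 1 ⊗ s`),  and
`([r₁₂, r₁₃] + r₁₂·s₃) + cyclic = 0` in `U(d')^{⊗3}`
(brackets are commutators; "cyclic" sums the two nontrivial cyclic permutations of the
three tensor factors).
-/

open TensorProduct

noncomputable section

attribute [local instance 100] LieRing.ofAssociativeRing

variable (k : Type*) [Field k] [CharZero k]
variable (d : Type*) [LieRing d] [LieAlgebra k d]

local notation "Uk" => UniversalEnvelopingAlgebra k d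

/-- The canonical embedding `d → U(d)`. -/
def iotaU : d →ₗ[k] Uk := (UniversalEnvelopingAlgebra.ι k).toLinearMap

/-- The image of `r ∈ d ⊗ d` in `U(d) ⊗ U(d)`. -/
def rU : d ⊗[k] d →ₗ[k] Uk ⊗[k] Uk := TensorProduct.map (iotaU k d) (iotaU k d)

/-- `u ↦ u₁₂ = u ⊗ 1`, placing `u ∈ U ⊗ U` in the first two factors of `U^{⊗3}`. -/
def emb12 : Uk ⊗[k] Uk →ₗ[k] Uk ⊗[k] (Uk ⊗[k] Uk) :=
  (TensorProduct.assoc k Uk Uk Uk).toLinearMap ∘ₗ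
    ((TensorProduct.mk k (Uk ⊗[k] Uk) Uk).flip 1)

/-- `u ↦ u₁₃`, placing `u ∈ U ⊗ U` in the first and third factors of `U^{⊗3}`. -/
def emb13 : Uk ⊗[k] Uk →ₗ[k] Uk ⊗[k] (Uk ⊗[k] Uk) :=
  TensorProduct.map LinearMap.id (TensorProduct.mk k Uk Uk 1)

/-- The cyclic permutation `x ⊗ y ⊗ z ↦ y ⊗ z ⊗ x` of `U^{⊗3}`. -/
def cyc : Uk ⊗[k] (Uk ⊗[k] Uk) →ₗ[k] Uk ⊗[k] (Uk ⊗[k] Uk) :=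
  (TensorProduct.assoc k Uk Uk Uk).toLinearMap ∘ₗ
    (TensorProduct.comm k Uk (Uk ⊗[k] Uk)).toLinearMap

/-- `E = [r₁₂, r₁₃] + r₁₂ · s₃` in `U^{⊗3}` (the bracket is the commutator). -/
def cybTerm (r : d ⊗[k] d) (s : d) : Uk ⊗[k] (Uk ⊗[k] Uk) :=
  (emb12 k d (rU k d r) * emb13 k d (rU k d r)
      - emb13 k d (rU k d r) * emb12 k d (rU k d r))
    + emb12 k d (rU k d r) * ((1 : Uk) ⊗ₜ[k] ((1 : Uk) ⊗ₜ[k] iotaU k d s))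

/-- Equations (1) `[r, Δ(s)] = 0` (with `Δ(s) = s⊗1 + 1⊗s`) and
(2) `([r₁₂, r₁₃] + r₁₂ s₃) + cyclic = 0`. -/
def SolvesModifiedCYB (r : d ⊗[k] d) (s : d) : Prop :=
  (rU k d r * ((iotaU k d s) ⊗ₜ[k] (1 : Uk) + (1 : Uk) ⊗ₜ[k] (iotaU k d s))
      - ((iotaU k d s) ⊗ₜ[k] (1 : Uk) + (1 : Uk) ⊗ₜ[k] (iotaU k d s)) * rU k d r = 0)
  ∧ cybTerm k d r s + cyc k d (cybTerm k d r s) + cyc k d (cyc k d (cybTerm k d r s)) = 0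


set_option linter.unusedSectionVars false in
lemma iotaU_lie (x y : d) :
    iotaU k d ⁅x, y⁆ = iotaU k d x * iotaU k d y - iotaU k d y * iotaU k d x := by
  simp [iotaU, Ring.lie_def]

set_option linter.unusedSectionVars false in
lemma emb12_tmul (x y : Uk) :
    emb12 k d (x ⊗ₜ[k] y) = x ⊗ₜ[k] (y ⊗ₜ[k] (1 : Uk)) := by
  simp [emb12]

set_option linter.unusedSectionVars false in
lemma emb13_tmul (x y : Uk) :
    emb13 k d (x ⊗ₜ[k] y) = x ⊗ₜ[k] ((1 : Uk) ⊗ₜ[k] y) := by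
  simp [emb13]

set_option linter.unusedSectionVars false in
lemma cyc_tmul (x y z : Uk) :
    cyc k d (x ⊗ₜ[k] (y ⊗ₜ[k] z)) = y ⊗ₜ[k] (z ⊗ₜ[k] x) := by
  simp [cyc]

set_option linter.unusedSectionVars false in
lemma part1_abstract {n : ℕ} (A Bv : Fin n → Uk) (C : Uk)
    (hAC : ∀ i, A i * C = C * A i) (hBC : ∀ i, Bv i * C = C * Bv i) :
    (∑ i : Fin n, (A i ⊗ₜ[k] Bv i - Bv i ⊗ₜ[k] A i)) *
        ((-C) ⊗ₜ[k] (1 : Uk) + (1 : Uk) ⊗ₜ[k] (-C))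
      - ((-C) ⊗ₜ[k] (1 : Uk) + (1 : Uk) ⊗ₜ[k] (-C)) *
        (∑ i : Fin n, (A i ⊗ₜ[k] Bv i - Bv i ⊗ₜ[k] A i)) = 0 := by
  rw [Finset.sum_mul, Finset.mul_sum, ← Finset.sum_sub_distrib]
  refine Finset.sum_eq_zero fun i _ => ?_
  simp only [sub_mul, mul_sub, add_mul, mul_add, Algebra.TensorProduct.tmul_mul_tmul,
    one_mul, mul_one, mul_neg, neg_mul, TensorProduct.tmul_neg, TensorProduct.neg_tmul,
    hAC i, hBC i]
  abel

set_option linter.unusedSectionVars false in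
set_option maxHeartbeats 1000000 in
lemma part2_abstract {n : ℕ} (A Bv : Fin n → Uk) (C : Uk)
    (hAA : ∀ i j, A i * A j = A j * A i)
    (hBB : ∀ i j, Bv i * Bv j = Bv j * Bv i)
    (hAB : ∀ i j, A i * Bv j = Bv j * A i + (if i = j then C else 0))
    (hAC : ∀ i, A i * C = C * A i) (hBC : ∀ i, Bv i * C = C * Bv i) :
    ∀ R : Uk ⊗[k] Uk, R = (∑ i : Fin n, (A i ⊗ₜ[k] Bv i - Bv i ⊗ₜ[k] A i)) →
    ∀ E : Uk ⊗[k] (Uk ⊗[k] Uk),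
      E = (emb12 k d R * emb13 k d R - emb13 k d R * emb12 k d R)
        + emb12 k d R * ((1 : Uk) ⊗ₜ[k] ((1 : Uk) ⊗ₜ[k] (-C))) →
    E + cyc k d E + cyc k d (cyc k d E) = 0 := by
  intro R hR E hE
  have h12 : emb12 k d R =
      ∑ i : Fin n, (A i ⊗ₜ[k] (Bv i ⊗ₜ[k] (1 : Uk)) - Bv i ⊗ₜ[k] (A i ⊗ₜ[k] (1 : Uk))) := by
    rw [hR, map_sum]
    exact Finset.sum_congr rfl fun i _ => by rw [map_sub, emb12_tmul, emb12_tmul]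
  have h13 : emb13 k d R =
      ∑ i : Fin n, (A i ⊗ₜ[k] ((1 : Uk) ⊗ₜ[k] Bv i) - Bv i ⊗ₜ[k] ((1 : Uk) ⊗ₜ[k] A i)) := by
    rw [hR, map_sum]
    exact Finset.sum_congr rfl fun i _ => by rw [map_sub, emb13_tmul, emb13_tmul]
  have hcomm : ∀ i j : Fin n,
      ((A i ⊗ₜ[k] (Bv i ⊗ₜ[k] (1 : Uk)) - Bv i ⊗ₜ[k] (A i ⊗ₜ[k] (1 : Uk))) *
          (A j ⊗ₜ[k] ((1 : Uk) ⊗ₜ[k] Bv j) - Bv j ⊗ₜ[k] ((1 : Uk) ⊗ₜ[k] A j))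
        - (A j ⊗ₜ[k] ((1 : Uk) ⊗ₜ[k] Bv j) - Bv j ⊗ₜ[k] ((1 : Uk) ⊗ₜ[k] A j)) *
          (A i ⊗ₜ[k] (Bv i ⊗ₜ[k] (1 : Uk)) - Bv i ⊗ₜ[k] (A i ⊗ₜ[k] (1 : Uk)))) =
      if i = j then
        (C ⊗ₜ[k] (A i ⊗ₜ[k] Bv i) - C ⊗ₜ[k] (Bv i ⊗ₜ[k] A i)) else 0 := by
    intro i j
    rcases eq_or_ne i j with h | h
    · subst h
      rw [if_pos rfl]
      have hABi : A i * Bv i = Bv i * A i + C := by simpa using hAB i i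
      simp only [sub_mul, mul_sub, Algebra.TensorProduct.tmul_mul_tmul, one_mul, mul_one,
        hABi, TensorProduct.add_tmul, hAA i i, hBB i i]
      abel
    · rw [if_neg h]
      have hABij : A i * Bv j = Bv j * A i := by simpa [h] using hAB i j
      have hABji : A j * Bv i = Bv i * A j := by simpa [Ne.symm h] using hAB j i
      simp only [sub_mul, mul_sub, Algebra.TensorProduct.tmul_mul_tmul, one_mul, mul_one,
        hABij, hABji, hAA i j, hBB i j]
      abel
  have hswap :
      (∑ i : Fin n, (A i ⊗ₜ[k] ((1 : Uk) ⊗ₜ[k] Bv i) - Bv i ⊗ₜ[k] ((1 : Uk) ⊗ₜ[k] A i))) *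
        (∑ i : Fin n, (A i ⊗ₜ[k] (Bv i ⊗ₜ[k] (1 : Uk)) - Bv i ⊗ₜ[k] (A i ⊗ₜ[k] (1 : Uk)))) =
      ∑ i : Fin n, ∑ j : Fin n,
        ((A j ⊗ₜ[k] ((1 : Uk) ⊗ₜ[k] Bv j) - Bv j ⊗ₜ[k] ((1 : Uk) ⊗ₜ[k] A j)) *
          (A i ⊗ₜ[k] (Bv i ⊗ₜ[k] (1 : Uk)) - Bv i ⊗ₜ[k] (A i ⊗ₜ[k] (1 : Uk)))) := by
    rw [Finset.sum_mul_sum]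
    exact Finset.sum_comm
  have hEsum : E = ∑ i : Fin n,
      (C ⊗ₜ[k] (A i ⊗ₜ[k] Bv i) - C ⊗ₜ[k] (Bv i ⊗ₜ[k] A i)
        - A i ⊗ₜ[k] (Bv i ⊗ₜ[k] C) + Bv i ⊗ₜ[k] (A i ⊗ₜ[k] C)) := by
    rw [hE, h12, h13, Finset.sum_mul_sum, hswap, Finset.sum_mul,
      ← Finset.sum_sub_distrib, ← Finset.sum_add_distrib]
    refine Finset.sum_congr rfl fun i _ => ?_
    rw [← Finset.sum_sub_distrib, Finset.sum_congr rfl fun j _ => hcomm i j,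
      Finset.sum_ite_eq, if_pos (Finset.mem_univ i)]
    simp only [sub_mul, Algebra.TensorProduct.tmul_mul_tmul]
    simp only [one_mul, mul_one, TensorProduct.tmul_neg]
    abel
  rw [hEsum, map_sum, map_sum, ← Finset.sum_add_distrib, ← Finset.sum_add_distrib]
  refine Finset.sum_eq_zero fun i _ => ?_
  simp only [map_add, map_sub, cyc_tmul]
  abel

theorem heisenberg_solves_modified_CYB
    {n : ℕ} (B : Module.Basis ((Fin n ⊕ Fin n) ⊕ Unit) k d)
    -- notation: `a i = B (inl (inl i))`, `b i = B (inl (inr i))`, `c = B (inr ())`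
    (ha : ∀ i j, ⁅B (Sum.inl (Sum.inl i)), B (Sum.inl (Sum.inl j))⁆ = 0)
    (hb : ∀ i j, ⁅B (Sum.inl (Sum.inr i)), B (Sum.inl (Sum.inr j))⁆ = 0)
    (hab : ∀ i j, ⁅B (Sum.inl (Sum.inl i)), B (Sum.inl (Sum.inr j))⁆ =
      if i = j then B (Sum.inr ()) else 0)
    (hac : ∀ i, ⁅B (Sum.inl (Sum.inl i)), B (Sum.inr ())⁆ = 0)
    (hbc : ∀ i, ⁅B (Sum.inl (Sum.inr i)), B (Sum.inr ())⁆ = 0) :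
    SolvesModifiedCYB k d
      (∑ i : Fin n,
        (B (Sum.inl (Sum.inl i)) ⊗ₜ[k] B (Sum.inl (Sum.inr i))
          - B (Sum.inl (Sum.inr i)) ⊗ₜ[k] B (Sum.inl (Sum.inl i))))
      (-(B (Sum.inr ()))) := by
  have hAA : ∀ i j, iotaU k d (B (Sum.inl (Sum.inl i))) * iotaU k d (B (Sum.inl (Sum.inl j)))
      = iotaU k d (B (Sum.inl (Sum.inl j))) * iotaU k d (B (Sum.inl (Sum.inl i))) := by
    intro i j
    have h := iotaU_lie k d (B (Sum.inl (Sum.inl i))) (B (Sum.inl (Sum.inl j)))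
    rw [ha, map_zero] at h
    exact sub_eq_zero.mp h.symm
  have hBB : ∀ i j, iotaU k d (B (Sum.inl (Sum.inr i))) * iotaU k d (B (Sum.inl (Sum.inr j)))
      = iotaU k d (B (Sum.inl (Sum.inr j))) * iotaU k d (B (Sum.inl (Sum.inr i))) := by
    intro i j
    have h := iotaU_lie k d (B (Sum.inl (Sum.inr i))) (B (Sum.inl (Sum.inr j)))
    rw [hb, map_zero] at h
    exact sub_eq_zero.mp h.symm
  have hAB : ∀ i j, iotaU k d (B (Sum.inl (Sum.inl i))) * iotaU k d (B (Sum.inl (Sum.inr j)))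
      = iotaU k d (B (Sum.inl (Sum.inr j))) * iotaU k d (B (Sum.inl (Sum.inl i)))
        + (if i = j then iotaU k d (B (Sum.inr ())) else 0) := by
    intro i j
    have h := iotaU_lie k d (B (Sum.inl (Sum.inl i))) (B (Sum.inl (Sum.inr j)))
    rw [hab, apply_ite (iotaU k d), map_zero] at h
    rw [h]
    abel
  have hAC : ∀ i, iotaU k d (B (Sum.inl (Sum.inl i))) * iotaU k d (B (Sum.inr ()))
      = iotaU k d (B (Sum.inr ())) * iotaU k d (B (Sum.inl (Sum.inl i))) := by
    intro i
    have h := iotaU_lie k d (B (Sum.inl (Sum.inl i))) (B (Sum.inr ()))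
    rw [hac, map_zero] at h
    exact sub_eq_zero.mp h.symm
  have hBC : ∀ i, iotaU k d (B (Sum.inl (Sum.inr i))) * iotaU k d (B (Sum.inr ()))
      = iotaU k d (B (Sum.inr ())) * iotaU k d (B (Sum.inl (Sum.inr i))) := by
    intro i
    have h := iotaU_lie k d (B (Sum.inl (Sum.inr i))) (B (Sum.inr ()))
    rw [hbc, map_zero] at h
    exact sub_eq_zero.mp h.symm
  have hs : iotaU k d (-(B (Sum.inr ()))) = -(iotaU k d (B (Sum.inr ()))) := map_neg _ _
  have hR : rU k d (∑ i : Fin n,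
      (B (Sum.inl (Sum.inl i)) ⊗ₜ[k] B (Sum.inl (Sum.inr i))
        - B (Sum.inl (Sum.inr i)) ⊗ₜ[k] B (Sum.inl (Sum.inl i)))) =
      ∑ i : Fin n, (iotaU k d (B (Sum.inl (Sum.inl i))) ⊗ₜ[k] iotaU k d (B (Sum.inl (Sum.inr i)))
        - iotaU k d (B (Sum.inl (Sum.inr i))) ⊗ₜ[k] iotaU k d (B (Sum.inl (Sum.inl i)))) := by
    rw [map_sum]
    exact Finset.sum_congr rfl fun i _ => by rw [map_sub]; rfl
  constructor
  · rw [hs, hR]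
    exact part1_abstract k d (fun i => iotaU k d (B (Sum.inl (Sum.inl i))))
      (fun i => iotaU k d (B (Sum.inl (Sum.inr i)))) (iotaU k d (B (Sum.inr ()))) hAC hBC
  · have hcyb : cybTerm k d (∑ i : Fin n,
        (B (Sum.inl (Sum.inl i)) ⊗ₜ[k] B (Sum.inl (Sum.inr i))
          - B (Sum.inl (Sum.inr i)) ⊗ₜ[k] B (Sum.inl (Sum.inl i)))) (-(B (Sum.inr ()))) =
        (emb12 k d (rU k d (∑ i : Fin n,
            (B (Sum.inl (Sum.inl i)) ⊗ₜ[k] B (Sum.inl (Sum.inr i))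
              - B (Sum.inl (Sum.inr i)) ⊗ₜ[k] B (Sum.inl (Sum.inl i)))))
          * emb13 k d (rU k d (∑ i : Fin n,
            (B (Sum.inl (Sum.inl i)) ⊗ₜ[k] B (Sum.inl (Sum.inr i))
              - B (Sum.inl (Sum.inr i)) ⊗ₜ[k] B (Sum.inl (Sum.inl i)))))
          - emb13 k d (rU k d (∑ i : Fin n,
            (B (Sum.inl (Sum.inl i)) ⊗ₜ[k] B (Sum.inl (Sum.inr i))
              - B (Sum.inl (Sum.inr i)) ⊗ₜ[k] B (Sum.inl (Sum.inl i)))))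
          * emb12 k d (rU k d (∑ i : Fin n,
            (B (Sum.inl (Sum.inl i)) ⊗ₜ[k] B (Sum.inl (Sum.inr i))
              - B (Sum.inl (Sum.inr i)) ⊗ₜ[k] B (Sum.inl (Sum.inl i))))))
        + emb12 k d (rU k d (∑ i : Fin n,
            (B (Sum.inl (Sum.inl i)) ⊗ₜ[k] B (Sum.inl (Sum.inr i))
              - B (Sum.inl (Sum.inr i)) ⊗ₜ[k] B (Sum.inl (Sum.inl i)))))
          * ((1 : Uk) ⊗ₜ[k] ((1 : Uk) ⊗ₜ[k] (-(iotaU k d (B (Sum.inr ())))))) := by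
      rw [cybTerm, hs]
    rw [hcyb]
    exact part2_abstract k d (fun i => iotaU k d (B (Sum.inl (Sum.inl i))))
      (fun i => iotaU k d (B (Sum.inl (Sum.inr i)))) (iotaU k d (B (Sum.inr ())))
      hAA hBB hAB hAC hBC _ hR _ rfl

end
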